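/- arXiv:2209.14579 — 4 statements merged into one kernel-verified Lean document; each statement's English description precedes it below -/
import Mathlib

section
/- Let A ∈ ℝ^{n×n} and let 1 ≤ s < d(A). Define Φ_s(A) = max over unit vectors v ∈ ℝⁿ of min over monic polynomials p of degree s of ‖p(A)v‖. Then Φ_s(A) = Φ_s(Aᵀ). -/
open Polynomial Filter Topology Matrix

noncomputable section

def mulv {ι : Type*} [Fintype ι] (A : Matrix ι ι ℝ) (v : EuclideanSpace ℝ ι) :
    EuclideanSpace ℝ ι :=
  (WithLp.equiv 2 (ι → ℝ)).symm (A.mulVec ((WithLp.equiv 2 (ι → ℝ)) v))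

def Krylov {ι : Type*} [Fintype ι] [DecidableEq ι] (A : Matrix ι ι ℝ) (s : ℕ) (v : EuclideanSpace ℝ ι) :
    Submodule ℝ (EuclideanSpace ℝ ι) :=
  Submodule.span ℝ (Set.range fun i : Fin s => mulv (A ^ (i : ℕ)) v)

def IsArnoldiProj {ι : Type*} [Fintype ι] [DecidableEq ι] (A : Matrix ι ι ℝ) (s : ℕ)
    (v w : EuclideanSpace ℝ ι) : Prop :=
  w - mulv (A ^ s) v ∈ Krylov A s v ∧ ∀ u ∈ Krylov A s v, inner ℝ w u = (0 : ℝ)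

def vgrade {ι : Type*} [Fintype ι] [DecidableEq ι] (A : Matrix ι ι ℝ)
    (v : EuclideanSpace ℝ ι) : ℕ :=
  sInf {d | ∃ p : ℝ[X], p ≠ 0 ∧ p.natDegree = d ∧ mulv (aeval A p) v = 0}

def dmin {ι : Type*} [Fintype ι] [DecidableEq ι] (A : Matrix ι ι ℝ) : ℕ :=
  (minpoly ℝ A).natDegree

def Phi {ι : Type*} [Fintype ι] [DecidableEq ι] (A : Matrix ι ι ℝ) (s : ℕ) : ℝ :=
  sSup {r | ∃ v : EuclideanSpace ℝ ι, ‖v‖ = 1 ∧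
    r = sInf {t | ∃ q : ℝ[X], q.Monic ∧ q.natDegree = s ∧ t = ‖mulv (aeval A q) v‖}}

def opNorm {ι : Type*} [Fintype ι] [DecidableEq ι] (A : Matrix ι ι ℝ) : ℝ :=
  ‖Matrix.toEuclideanCLM (𝕜 := ℝ) A‖

/-! ### Auxiliary material -/

namespace PhiTranspose

open Submodule Finset

variable {ι : Type*} [Fintype ι] [DecidableEq ι]

local notation "E" => EuclideanSpace ℝ ι

lemma mulv_apply (M : Matrix ι ι ℝ) (v : E) (i : ι) :
    mulv M v i = M.mulVec (fun j => v j) i := rfl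

lemma mulv_add (M N : Matrix ι ι ℝ) (v : E) :
    mulv (M + N) v = mulv M v + mulv N v := by
  ext i
  simp [mulv_apply, Matrix.add_mulVec]

lemma mulv_smul (c : ℝ) (M : Matrix ι ι ℝ) (v : E) :
    mulv (c • M) v = c • mulv M v := by
  ext i
  simp [mulv_apply, Matrix.smul_mulVec]

lemma mulv_sub (M N : Matrix ι ι ℝ) (v : E) :
    mulv (M - N) v = mulv M v - mulv N v := by
  ext i
  simp [mulv_apply, Matrix.sub_mulVec]

lemma mulv_smul_vec (M : Matrix ι ι ℝ) (c : ℝ) (v : E) :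
    mulv M (c • v) = c • mulv M v := by
  ext i
  show (M.mulVec fun j => c • v j) i = c * M.mulVec (fun j => v j) i
  simp only [smul_eq_mul, Matrix.mulVec, dotProduct, Finset.mul_sum]
  exact Finset.sum_congr rfl fun j _ => by ring

lemma mulv_zero (M : Matrix ι ι ℝ) : mulv M (0 : E) = 0 := by
  ext i
  show (M.mulVec fun _ => (0 : ℝ)) i = 0
  simp [Matrix.mulVec, dotProduct]

/-- `mulv · v` as a linear map in the matrix. -/
def mulvL (v : E) : Matrix ι ι ℝ →ₗ[ℝ] E where
  toFun M := mulv M v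
  map_add' M N := mulv_add M N v
  map_smul' c M := mulv_smul c M v

@[simp] lemma mulvL_apply (v : E) (M : Matrix ι ι ℝ) : mulvL v M = mulv M v := rfl

/-- Transposition identity for the Euclidean inner product. -/
lemma inner_mulv (M : Matrix ι ι ℝ) (v w : E) :
    (inner ℝ w (mulv M v) : ℝ) = inner ℝ v (mulv Mᵀ w) := by
  simp only [PiLp.inner_apply, RCLike.inner_apply, starRingEnd_apply, star_trivial,
    mulv_apply, Matrix.mulVec, dotProduct, Matrix.transpose_apply]
  simp only [Finset.sum_mul]
  rw [Finset.sum_comm]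
  exact Finset.sum_congr rfl fun j _ => Finset.sum_congr rfl fun i _ => by ring

lemma natDegree_lt_of_degree_lt {r : ℝ[X]} {s : ℕ} (hs : 1 ≤ s) (h : r.degree < (s : ℕ)) :
    r.natDegree < s := by
  rcases eq_or_ne r 0 with rfl | h0
  · simpa using (show 0 < s by omega)
  · exact (Polynomial.natDegree_lt_iff_degree_lt h0).mpr h

lemma degree_lt_of_natDegree_lt {r : ℝ[X]} {s : ℕ} (h : r.natDegree < s) :
    r.degree < (s : ℕ) :=
  lt_of_le_of_lt Polynomial.degree_le_natDegree (by exact_mod_cast h)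

lemma mulv_aeval_mem (A : Matrix ι ι ℝ) {s : ℕ} (v : E) {r : ℝ[X]}
    (hr : r.natDegree < s) : mulv (aeval A r) v ∈ Krylov A s v := by
  rw [Polynomial.as_sum_range' r s hr]
  rw [show mulv (aeval A (∑ i ∈ range s, monomial i (r.coeff i))) v
      = mulvL v (aeval A (∑ i ∈ range s, monomial i (r.coeff i))) from rfl,
    map_sum, map_sum]
  apply Submodule.sum_mem
  intro i hi
  have hi' : i < s := Finset.mem_range.mp hi
  have : aeval A (monomial i (r.coeff i)) = r.coeff i • A ^ i := by
    simp [Polynomial.aeval_monomial, Algebra.smul_def]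
  rw [mulvL_apply, this, mulv_smul]
  exact Submodule.smul_mem _ _ (Submodule.subset_span ⟨⟨i, hi'⟩, rfl⟩)

lemma krylov_elt {A : Matrix ι ι ℝ} {s : ℕ} (hs : 1 ≤ s) {v u : E}
    (hu : u ∈ Krylov A s v) :
    ∃ r : ℝ[X], r.natDegree < s ∧ u = mulv (aeval A r) v := by
  rw [Krylov, mem_span_range_iff_exists_fun] at hu
  obtain ⟨c, hc⟩ := hu
  refine ⟨∑ i : Fin s, Polynomial.C (c i) * X ^ (i : ℕ), ?_, ?_⟩
  · refine lt_of_le_of_lt (Polynomial.natDegree_sum_le_of_forall_le _ _ fun i _ => ?_)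
      (Nat.sub_lt hs one_pos)
    exact le_trans (Polynomial.natDegree_C_mul_X_pow_le _ _) (Nat.le_sub_one_of_lt i.2)
  · rw [map_sum, show mulv (∑ i : Fin s, aeval A (Polynomial.C (c i) * X ^ (i : ℕ))) v
      = mulvL v (∑ i : Fin s, aeval A (Polynomial.C (c i) * X ^ (i : ℕ))) from rfl, map_sum]
    rw [← hc]
    apply Finset.sum_congr rfl
    intro i _
    have : aeval A (Polynomial.C (c i) * X ^ (i : ℕ)) = c i • A ^ (i : ℕ) := by
      simp [Algebra.smul_def]
    rw [mulvL_apply, this, mulv_smul]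

/-- The inner minimization set equals the set of distances to the Krylov subspace. -/
lemma inner_set_eq (A : Matrix ι ι ℝ) {s : ℕ} (hs : 1 ≤ s) (v : E) :
    {t | ∃ q : ℝ[X], q.Monic ∧ q.natDegree = s ∧ t = ‖mulv (aeval A q) v‖}
      = (fun u : E => ‖mulv (A ^ s) v - u‖) '' (Krylov A s v : Set E) := by
  ext t
  constructor
  · rintro ⟨q, hq, hqs, rfl⟩
    have hq0 : q ≠ 0 := hq.ne_zero
    have hdq : q.degree = (s : ℕ) := by
      rw [Polynomial.degree_eq_natDegree hq0, hqs]
    have hdeg : (X ^ s - q : ℝ[X]).degree < (s : ℕ) := by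
      have := Polynomial.degree_sub_lt (p := (X : ℝ[X]) ^ s) (q := q)
        (by rw [hdq, Polynomial.degree_X_pow]) (pow_ne_zero s Polynomial.X_ne_zero)
        (by rw [hq.leadingCoeff, Polynomial.leadingCoeff_X_pow])
      rwa [Polynomial.degree_X_pow] at this
    refine ⟨mulv (aeval A (X ^ s - q)) v, mulv_aeval_mem A v (natDegree_lt_of_degree_lt hs hdeg), ?_⟩
    have h2 : mulv (A ^ s) v - mulv (aeval A (X ^ s - q)) v = mulv (aeval A q) v := by
      rw [map_sub, mulv_sub]
      simp [Polynomial.aeval_X_pow]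
    show ‖mulv (A ^ s) v - mulv (aeval A (X ^ s - q)) v‖ = ‖mulv (aeval A q) v‖
    rw [h2]
  · rintro ⟨u, hu, rfl⟩
    obtain ⟨r, hr, rfl⟩ := krylov_elt hs hu
    refine ⟨X ^ s - r, Polynomial.monic_X_pow_sub (degree_lt_of_natDegree_lt hr), ?_, ?_⟩
    · have hdeg : (X ^ s - r : ℝ[X]).degree = (s : ℕ) := by
        rw [Polynomial.degree_sub_eq_left_of_degree_lt, Polynomial.degree_X_pow]
        rw [Polynomial.degree_X_pow]; exact degree_lt_of_natDegree_lt hr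
      exact Polynomial.natDegree_eq_of_degree_eq_some hdeg
    · rw [map_sub, mulv_sub]
      simp [Polynomial.aeval_X_pow]

/-- The value of the inner minimization. -/
def g (A : Matrix ι ι ℝ) (s : ℕ) (v : E) : ℝ :=
  sInf {t | ∃ q : ℝ[X], q.Monic ∧ q.natDegree = s ∧ t = ‖mulv (aeval A q) v‖}

lemma phi_eq_sSup_g (A : Matrix ι ι ℝ) (s : ℕ) :
    Phi A s = sSup {r | ∃ v : E, ‖v‖ = 1 ∧ r = g A s v} := rfl

/-- The residual vector of the Krylov least squares problem. -/
def resid (A : Matrix ι ι ℝ) (s : ℕ) (v : E) : E :=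
  mulv (A ^ s) v - (orthogonalProjection (Krylov A s v) (mulv (A ^ s) v) : E)

lemma resid_mem_orthogonal (A : Matrix ι ι ℝ) (s : ℕ) (v : E) :
    resid A s v ∈ (Krylov A s v)ᗮ :=
  Submodule.sub_starProjection_mem_orthogonal (K := Krylov A s v) (mulv (A ^ s) v)

lemma inner_resid_eq_zero (A : Matrix ι ι ℝ) (s : ℕ) (v : E) {u : E}
    (hu : u ∈ Krylov A s v) : (inner ℝ (resid A s v) u : ℝ) = 0 := by
  rw [real_inner_comm]
  exact (resid_mem_orthogonal A s v) u hu

lemma isLeast_inner_set (A : Matrix ι ι ℝ) {s : ℕ} (hs : 1 ≤ s) (v : E) :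
    IsLeast {t | ∃ q : ℝ[X], q.Monic ∧ q.natDegree = s ∧ t = ‖mulv (aeval A q) v‖}
      ‖resid A s v‖ := by
  rw [inner_set_eq A hs v]
  constructor
  · exact ⟨_, (orthogonalProjection (Krylov A s v) (mulv (A ^ s) v)).2, rfl⟩
  · rintro t ⟨u, hu, rfl⟩
    rw [resid]
    show ‖mulv (A ^ s) v - (Krylov A s v).starProjection (mulv (A ^ s) v)‖ ≤ _
    rw [starProjection_minimal]
    exact ciInf_le ⟨0, by rintro x ⟨z, rfl⟩; exact norm_nonneg _⟩ (⟨u, hu⟩ : Krylov A s v)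

lemma g_eq (A : Matrix ι ι ℝ) {s : ℕ} (hs : 1 ≤ s) (v : E) :
    g A s v = ‖resid A s v‖ :=
  (isLeast_inner_set A hs v).csInf_eq

lemma inner_zero_of_mem_span {w : E} {s : ℕ} {A : Matrix ι ι ℝ} {v : E}
    (hw : ∀ i < s, (inner ℝ w (mulv (A ^ i) v) : ℝ) = 0) {u : E} (hu : u ∈ Krylov A s v) :
    (inner ℝ w u : ℝ) = 0 := by
  induction hu using Submodule.span_induction with
  | mem x hx =>
    obtain ⟨i, rfl⟩ := hx
    exact hw i i.2
  | zero => simp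
  | add x y _ _ hx hy => rw [inner_add_right, hx, hy, add_zero]
  | smul c x _ hx => rw [inner_smul_right, hx, mul_zero]

/-- The symmetric characterization set. -/
def SSet (A : Matrix ι ι ℝ) (s : ℕ) : Set ℝ :=
  {r | ∃ v w : E, ‖v‖ ≤ 1 ∧ ‖w‖ ≤ 1 ∧ (∀ i < s, (inner ℝ w (mulv (A ^ i) v) : ℝ) = 0) ∧
    r = inner ℝ w (mulv (A ^ s) v)}

lemma sSet_transpose (A : Matrix ι ι ℝ) (s : ℕ) : SSet A s = SSet Aᵀ s := by
  have key : ∀ B : Matrix ι ι ℝ, SSet B s ⊆ SSet Bᵀ s := by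
    intro B r ⟨v, w, hv, hw, hperp, hr⟩
    refine ⟨w, v, hw, hv, fun i hi => ?_, ?_⟩
    · rw [← Matrix.transpose_pow, ← inner_mulv]
      exact hperp i hi
    · rw [← Matrix.transpose_pow, ← inner_mulv, hr]
  refine le_antisymm (key A) ?_
  have := key Aᵀ
  rwa [Matrix.transpose_transpose] at this

variable [Nonempty ι]

lemma rset_nonempty (A : Matrix ι ι ℝ) (s : ℕ) :
    {r | ∃ v : E, ‖v‖ = 1 ∧ r = g A s v}.Nonempty := by
  refine ⟨g A s (EuclideanSpace.single (Classical.arbitrary ι) 1),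
    EuclideanSpace.single (Classical.arbitrary ι) 1, ?_, rfl⟩
  rw [EuclideanSpace.norm_single]
  simp

lemma rset_subset_sset (A : Matrix ι ι ℝ) {s : ℕ} (hs : 1 ≤ s) :
    {r | ∃ v : E, ‖v‖ = 1 ∧ r = g A s v} ⊆ SSet A s := by
  rintro r ⟨v, hv, rfl⟩
  rw [g_eq A hs v]
  set x := mulv (A ^ s) v with hx
  set res := resid A s v with hres
  by_cases h0 : res = 0
  · refine ⟨v, 0, le_of_eq hv, by simp, fun i _ => by simp, ?_⟩
    rw [h0]
    simp
  · refine ⟨v, ‖res‖⁻¹ • res, le_of_eq hv, ?_, fun i hi => ?_, ?_⟩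
    · rw [norm_smul, norm_inv, norm_norm, inv_mul_cancel₀ (norm_ne_zero_iff.mpr h0)]
    · rw [inner_smul_left]
      have : mulv (A ^ i) v ∈ Krylov A s v := Submodule.subset_span ⟨⟨i, hi⟩, rfl⟩
      rw [inner_resid_eq_zero A s v this]
      simp
    · rw [real_inner_smul_left]
      have hxdecomp : (inner ℝ res x : ℝ) = ‖res‖ ^ 2 := by
        have : x = res + (orthogonalProjection (Krylov A s v) x : E) := by
          rw [hres, resid, ← hx]; abel
        rw [this, inner_add_right,
          inner_resid_eq_zero A s v (orthogonalProjection (Krylov A s v) x).2,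
          real_inner_self_eq_norm_sq]
        ring
      rw [hxdecomp]
      have hn : ‖res‖ ≠ 0 := norm_ne_zero_iff.mpr h0
      field_simp

lemma sset_le_rset (A : Matrix ι ι ℝ) {s : ℕ} (hs : 1 ≤ s) {r : ℝ} (hr : r ∈ SSet A s) :
    ∃ r' ∈ {r | ∃ v : E, ‖v‖ = 1 ∧ r = g A s v}, r ≤ r' := by
  obtain ⟨v, w, hv, hw, hperp, rfl⟩ := hr
  by_cases hpos : (0 : ℝ) < inner ℝ w (mulv (A ^ s) v)
  · have hv0 : v ≠ 0 := by
      rintro rfl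
      rw [mulv_zero] at hpos
      simp at hpos
    set v' : E := ‖v‖⁻¹ • v with hv'
    have hnv : ‖v‖ ≠ 0 := norm_ne_zero_iff.mpr hv0
    have hv'norm : ‖v'‖ = 1 := by
      rw [hv', norm_smul, norm_inv, norm_norm, inv_mul_cancel₀ hnv]
    refine ⟨g A s v', ⟨v', hv'norm, rfl⟩, ?_⟩
    have hscale : ∀ M : Matrix ι ι ℝ, (inner ℝ w (mulv M v') : ℝ) = ‖v‖⁻¹ * inner ℝ w (mulv M v) := by
      intro M
      rw [hv', mulv_smul_vec, inner_smul_right]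
    -- w is orthogonal to the Krylov space of v'
    have hperp' : ∀ u ∈ Krylov A s v', (inner ℝ w u : ℝ) = 0 := by
      intro u hu
      refine inner_zero_of_mem_span (fun i hi => ?_) hu
      rw [hscale, hperp i hi, mul_zero]
    -- the inner product with the residual bounds
    have key : (inner ℝ w (mulv (A ^ s) v') : ℝ) ≤ g A s v' := by
      rw [g_eq A hs v']
      have hdecomp : mulv (A ^ s) v' = resid A s v' +
          (orthogonalProjection (Krylov A s v') (mulv (A ^ s) v') : E) := by
        rw [resid]; abel
      calc (inner ℝ w (mulv (A ^ s) v') : ℝ)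
          = inner ℝ w (resid A s v') := by
            rw [hdecomp, inner_add_right,
              hperp' _ (orthogonalProjection (Krylov A s v') (mulv (A ^ s) v')).2, add_zero]
        _ ≤ ‖w‖ * ‖resid A s v'‖ := real_inner_le_norm _ _
        _ ≤ 1 * ‖resid A s v'‖ := by
            apply mul_le_mul_of_nonneg_right hw (norm_nonneg _)
        _ = ‖resid A s v'‖ := one_mul _
    refine le_trans ?_ key
    rw [hscale]
    have h1 : (1 : ℝ) ≤ ‖v‖⁻¹ := by
      rw [le_inv_comm₀]
      · simpa using hv
      · norm_num
      · exact lt_of_le_of_ne (norm_nonneg v) (Ne.symm hnv)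
    nlinarith [hpos]
  · push_neg at hpos
    obtain ⟨r', hr'⟩ := rset_nonempty A s
    refine ⟨r', hr', le_trans hpos ?_⟩
    obtain ⟨v'', hv'', rfl⟩ := hr'
    rw [g_eq A hs]
    exact norm_nonneg _

lemma sset_bddAbove (A : Matrix ι ι ℝ) (s : ℕ) : BddAbove (SSet A s) := by
  set L := LinearMap.toContinuousLinearMap (Matrix.toEuclideanLin (A ^ s)) with hL
  refine ⟨‖L‖, ?_⟩
  rintro r ⟨v, w, hv, hw, _, rfl⟩
  have hmul : mulv (A ^ s) v = L v := rfl
  calc (inner ℝ w (mulv (A ^ s) v) : ℝ)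
      ≤ ‖w‖ * ‖mulv (A ^ s) v‖ := real_inner_le_norm _ _
    _ ≤ 1 * (‖L‖ * ‖v‖) :=
        _root_.mul_le_mul hw (by rw [hmul]; exact L.le_opNorm v) (norm_nonneg _) zero_le_one
    _ ≤ 1 * (‖L‖ * 1) :=
        mul_le_mul_of_nonneg_left (mul_le_mul_of_nonneg_left hv (norm_nonneg L)) zero_le_one
    _ = ‖L‖ := by ring

lemma phi_eq_sSup_sset (A : Matrix ι ι ℝ) {s : ℕ} (hs : 1 ≤ s) :
    Phi A s = sSup (SSet A s) := by
  rw [phi_eq_sSup_g]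
  set R := {r | ∃ v : E, ‖v‖ = 1 ∧ r = g A s v} with hR
  have hsub : R ⊆ SSet A s := rset_subset_sset A hs
  have hbdd : BddAbove (SSet A s) := sset_bddAbove A s
  have hRbdd : BddAbove R := hbdd.mono hsub
  have hRne : R.Nonempty := rset_nonempty A s
  have hSne : (SSet A s).Nonempty := hRne.mono hsub
  apply le_antisymm
  · exact csSup_le_csSup hbdd hRne hsub
  · refine csSup_le hSne fun r hr => ?_
    obtain ⟨r', hr', hle⟩ := sset_le_rset A hs hr
    exact le_trans hle (le_csSup hRbdd hr')

end PhiTranspose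

theorem phi_transpose {n : ℕ} (A : Matrix (Fin n) (Fin n) ℝ) (s : ℕ)
    (hs1 : 1 ≤ s) (hs2 : s < dmin A) :
    Phi A s = Phi Aᵀ s := by
  rcases Nat.eq_zero_or_pos n with hn | hn
  · subst hn
    congr 1
    ext i j
    exact i.elim0
  · haveI : Nonempty (Fin n) := ⟨⟨0, hn⟩⟩
    rw [PhiTranspose.phi_eq_sSup_sset A hs1, PhiTranspose.phi_eq_sSup_sset Aᵀ hs1,
      PhiTranspose.sSet_transpose]
end
end

section
/- Let A ∈ ℝ^{n×n}, 1 ≤ s < d(A), and let v ∈ ℝⁿ be a unit vector with d(A,v) ≥ s+1. Let w̃ = P(A)v be the Arnoldi projection of v (w̃ ∈ A^s v + K_s(A,v), w̃ ⟂ K_s(A,v)), and set w = w̃/‖w̃‖. Then for every monic polynomial q of degree s, ‖w̃‖ = ⟨v, q(Aᵀ)w⟩. Consequently d(Aᵀ,w) ≥ s+1. -/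
open Polynomial Filter Topology Matrix

noncomputable section

set_option linter.unusedSectionVars false

namespace ArnoldiAux
variable {ι : Type*} [Fintype ι] [DecidableEq ι]

lemma mulv_toLin (A : Matrix ι ι ℝ) (v : EuclideanSpace ℝ ι) :
    mulv A v = Matrix.toEuclideanLin A v := rfl

lemma mulv_zero_mat (v : EuclideanSpace ℝ ι) : mulv (0 : Matrix ι ι ℝ) v = 0 := by
  rw [mulv_toLin, map_zero]; rfl

lemma mulv_zero (A : Matrix ι ι ℝ) : mulv A (0 : EuclideanSpace ℝ ι) = 0 := by
  rw [mulv_toLin, map_zero]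

lemma mulv_sub_mat (A B : Matrix ι ι ℝ) (v : EuclideanSpace ℝ ι) :
    mulv (A - B) v = mulv A v - mulv B v := by
  simp only [mulv_toLin, map_sub, LinearMap.sub_apply]

lemma mulv_smul_mat (c : ℝ) (A : Matrix ι ι ℝ) (v : EuclideanSpace ℝ ι) :
    mulv (c • A) v = c • mulv A v := by
  simp only [mulv_toLin, _root_.map_smul, LinearMap.smul_apply]

lemma mulv_sum_mat {α : Type*} (t : Finset α) (f : α → Matrix ι ι ℝ) (v : EuclideanSpace ℝ ι) :
    mulv (∑ i ∈ t, f i) v = ∑ i ∈ t, mulv (f i) v := by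
  simp only [mulv_toLin, map_sum, LinearMap.sum_apply]

lemma mulv_mul (A B : Matrix ι ι ℝ) (v : EuclideanSpace ℝ ι) :
    mulv (A * B) v = mulv A (mulv B v) := by
  simp [mulv, Matrix.mulVec_mulVec]

lemma inner_mulv (A : Matrix ι ι ℝ) (v u : EuclideanSpace ℝ ι) :
    (inner ℝ (mulv A v) u : ℝ) = inner ℝ v (mulv Aᵀ u) := by
  simp only [mulv, PiLp.inner_apply, RCLike.inner_apply, conj_trivial]
  have h : ∀ (x y : ι → ℝ), (∑ i, x i * y i) = x ⬝ᵥ y := fun x y => rfl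
  rw [h, h]
  show _ ⬝ᵥ (A *ᵥ _) = (Aᵀ *ᵥ _) ⬝ᵥ _
  rw [Matrix.dotProduct_mulVec, ← Matrix.vecMul_transpose, Matrix.transpose_transpose]
  rfl

lemma transpose_algebraMap' (a : ℝ) :
    ((algebraMap ℝ (Matrix ι ι ℝ)) a)ᵀ = (algebraMap ℝ (Matrix ι ι ℝ)) a := by
  simp [Matrix.algebraMap_eq_diagonal, Matrix.diagonal_transpose]

lemma aeval_transpose (A : Matrix ι ι ℝ) (p : ℝ[X]) :
    (aeval A p)ᵀ = aeval Aᵀ p := by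
  induction p using Polynomial.induction_on' with
  | add p q hp hq => simp [Matrix.transpose_add, hp, hq]
  | monomial k a =>
    simp [aeval_monomial, Matrix.transpose_pow, transpose_algebraMap', Algebra.commutes]

lemma mulv_mem_Krylov (A : Matrix ι ι ℝ) (s : ℕ) (v : EuclideanSpace ℝ ι)
    {p : ℝ[X]} (hp : p.natDegree < s) :
    mulv (aeval A p) v ∈ Krylov A s v := by
  rw [Polynomial.aeval_eq_sum_range' hp, mulv_sum_mat]
  refine Submodule.sum_mem _ (fun i hi => ?_)
  rw [mulv_smul_mat]
  refine Submodule.smul_mem _ _ (Submodule.subset_span ?_)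
  exact ⟨⟨i, Finset.mem_range.mp hi⟩, rfl⟩

lemma sub_pow_natDegree_lt {q : ℝ[X]} {s : ℕ} (hm : q.Monic) (hd : q.natDegree = s)
    (hs : 1 ≤ s) : (q - X ^ s).natDegree < s := by
  by_cases h : q - X ^ s = 0
  · rw [h]; simpa using (show 0 < s by omega)
  · rw [Polynomial.natDegree_lt_iff_degree_lt h]
    have hdeg : q.degree = (X ^ s : ℝ[X]).degree := by
      rw [Polynomial.degree_X_pow, Polynomial.degree_eq_natDegree hm.ne_zero, hd]
    have := Polynomial.degree_sub_lt hdeg hm.ne_zero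
      (by rw [hm.leadingCoeff, Polynomial.leadingCoeff_X_pow])
    rwa [Polynomial.degree_eq_natDegree hm.ne_zero, hd] at this

lemma qv_sub_mem_Krylov (A : Matrix ι ι ℝ) (s : ℕ) (v : EuclideanSpace ℝ ι)
    {q : ℝ[X]} (hm : q.Monic) (hd : q.natDegree = s) (hs : 1 ≤ s) :
    mulv (aeval A q) v - mulv (A ^ s) v ∈ Krylov A s v := by
  have : mulv (aeval A q) v - mulv (A ^ s) v = mulv (aeval A (q - X ^ s)) v := by
    rw [map_sub, mulv_sub_mat, Polynomial.aeval_X_pow]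
  rw [this]
  exact mulv_mem_Krylov A s v (sub_pow_natDegree_lt hm hd hs)

lemma inner_wt_qv {A : Matrix ι ι ℝ} {s : ℕ} {v wt : EuclideanSpace ℝ ι}
    (hwt : IsArnoldiProj A s v wt) {q : ℝ[X]} (hm : q.Monic) (hd : q.natDegree = s)
    (hs : 1 ≤ s) : (inner ℝ wt (mulv (aeval A q) v) : ℝ) = ‖wt‖ ^ 2 := by
  obtain ⟨h1, h2⟩ := hwt
  have e1 : (inner ℝ wt (mulv (aeval A q) v - mulv (A ^ s) v) : ℝ) = 0 :=
    h2 _ (qv_sub_mem_Krylov A s v hm hd hs)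
  have e2 : (inner ℝ wt (wt - mulv (A ^ s) v) : ℝ) = 0 := h2 _ h1
  rw [inner_sub_right] at e1 e2
  have := real_inner_self_eq_norm_sq wt
  linarith

lemma wt_ne_zero {A : Matrix ι ι ℝ} {s : ℕ} {v wt : EuclideanSpace ℝ ι}
    (hs : 1 ≤ s) (hgrade : s + 1 ≤ vgrade A v) (hwt : IsArnoldiProj A s v wt) :
    wt ≠ 0 := by
  intro h0
  have hmem : mulv (A ^ s) v ∈ Krylov A s v := by
    have h := hwt.1
    rw [h0, zero_sub] at h
    simpa using Submodule.neg_mem _ h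
  rw [Krylov, Submodule.mem_span_range_iff_exists_fun ℝ] at hmem
  obtain ⟨c, hc⟩ := hmem
  set r : ℝ[X] := ∑ i : Fin s, C (c i) * X ^ (i : ℕ) with hr
  have hrdeg : r.natDegree < s := by
    have : r.natDegree ≤ s - 1 := by
      refine Polynomial.natDegree_sum_le_of_forall_le _ _ (fun i _ => ?_)
      calc (C (c i) * X ^ (i : ℕ)).natDegree ≤ (i : ℕ) := by
            exact (Polynomial.natDegree_C_mul_le (c i) (X ^ (i : ℕ))).trans
              (by simp)
        _ ≤ s - 1 := by omega
    omega
  set p : ℝ[X] := X ^ s - r with hp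
  have hpd : p.natDegree = s := by
    rw [hp, Polynomial.natDegree_sub_eq_left_of_natDegree_lt]
    · exact Polynomial.natDegree_X_pow s
    · rwa [Polynomial.natDegree_X_pow]
  have hp0 : p ≠ 0 := by
    intro h
    rw [h] at hpd
    simp at hpd
    omega
  have hpz : mulv (aeval A p) v = 0 := by
    have hrv : mulv (aeval A r) v = mulv (A ^ s) v := by
      rw [hr, map_sum, mulv_sum_mat]
      rw [← hc]
      refine Finset.sum_congr rfl (fun i _ => ?_)
      rw [_root_.map_mul, Polynomial.aeval_C, Polynomial.aeval_X_pow, ← Algebra.smul_def,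
        mulv_smul_mat]
    rw [hp, map_sub, mulv_sub_mat, Polynomial.aeval_X_pow, hrv, sub_self]
  have : vgrade A v ≤ s := Nat.sInf_le ⟨p, hp0, hpd, hpz⟩
  omega

end ArnoldiAux

open ArnoldiAux

theorem arnoldi_cross_identity {n : ℕ} (A : Matrix (Fin n) (Fin n) ℝ) (s : ℕ)
    (hs1 : 1 ≤ s) (hs2 : s < dmin A) (v : EuclideanSpace ℝ (Fin n))
    (hv : ‖v‖ = 1) (hgrade : s + 1 ≤ vgrade A v)
    (wt : EuclideanSpace ℝ (Fin n)) (hwt : IsArnoldiProj A s v wt) :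
    (∀ q : ℝ[X], q.Monic → q.natDegree = s →
      ‖wt‖ = (inner ℝ v (mulv (aeval Aᵀ q) (‖wt‖⁻¹ • wt)) : ℝ)) ∧
    s + 1 ≤ vgrade Aᵀ (‖wt‖⁻¹ • wt) := by
  have hwt0 : wt ≠ 0 := wt_ne_zero hs1 hgrade hwt
  have hn0 : ‖wt‖ ≠ 0 := norm_ne_zero_iff.mpr hwt0
  have part1 : ∀ q : ℝ[X], q.Monic → q.natDegree = s →
      ‖wt‖ = (inner ℝ v (mulv (aeval Aᵀ q) (‖wt‖⁻¹ • wt)) : ℝ) := by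
    intro q hm hd
    have key : (inner ℝ v (mulv (aeval Aᵀ q) (‖wt‖⁻¹ • wt)) : ℝ)
        = inner ℝ (mulv (aeval A q) v) (‖wt‖⁻¹ • wt) := by
      rw [inner_mulv, aeval_transpose]
    rw [key, real_inner_smul_right, real_inner_comm, inner_wt_qv hwt hm hd hs1]
    field_simp
  refine ⟨part1, ?_⟩
  show s + 1 ≤ sInf _
  refine le_csInf ?_ ?_
  · refine ⟨(Aᵀ.charpoly).natDegree, Aᵀ.charpoly, (Aᵀ.charpoly_monic).ne_zero, rfl, ?_⟩
    rw [Matrix.aeval_self_charpoly, mulv_zero_mat]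
  · rintro d ⟨p, hp0, hpd, hpz⟩
    by_contra hlt
    push_neg at hlt
    have hds : d ≤ s := by omega
    have hlc : p.leadingCoeff ≠ 0 := Polynomial.leadingCoeff_ne_zero.mpr hp0
    set q : ℝ[X] := C p.leadingCoeff⁻¹ * (X ^ (s - d) * p) with hq
    have hq0 : (X ^ (s - d) * p : ℝ[X]) ≠ 0 :=
      mul_ne_zero (pow_ne_zero _ Polynomial.X_ne_zero) hp0
    have hqm : q.Monic := by
      show q.leadingCoeff = 1
      rw [hq, Polynomial.leadingCoeff_mul, Polynomial.leadingCoeff_mul,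
        Polynomial.leadingCoeff_C, Polynomial.leadingCoeff_X_pow, one_mul,
        inv_mul_cancel₀ hlc]
    have hqd : q.natDegree = s := by
      rw [hq, Polynomial.natDegree_mul (by simpa using inv_ne_zero hlc) hq0,
        Polynomial.natDegree_C, Polynomial.natDegree_mul (pow_ne_zero _ Polynomial.X_ne_zero) hp0,
        Polynomial.natDegree_X_pow, hpd]
      omega
    have hqz : mulv (aeval Aᵀ q) (‖wt‖⁻¹ • wt) = 0 := by
      rw [hq, _root_.map_mul, _root_.map_mul, mulv_mul, mulv_mul, hpz, mulv_zero, mulv_zero]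
    have := part1 q hqm hqd
    rw [hqz] at this
    simp at this
    exact hwt0 this
end
end

section
/- Let A ∈ ℝ^{n×n}, 1 ≤ s < d(A), and let v₀ ∈ ℝⁿ be a unit vector with d(A,v₀) ≥ s+1. Consider the Arnoldi cross iteration: w̃_k is the Arnoldi projection of v_k with respect to A and s, w_k = w̃_k/‖w̃_k‖, ṽ_{k+1} is the Arnoldi projection of w_k with respect to Aᵀ and s, v_{k+1} = ṽ_{k+1}/‖ṽ_{k+1}‖. Then all these vectors are well defined (the projections are nonzero), and for all k: ‖w̃_k‖ ≤ ‖ṽ_{k+1}‖ ≤ ‖w̃_{k+1}‖, with ‖w̃_k‖ = ‖ṽ_{k+1}‖ if and only if v_k = α v_{k+1} for some α ≠ 0. -/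
open Polynomial Filter Topology Matrix

noncomputable section

def ACI {ι : Type*} [Fintype ι] [DecidableEq ι] (A : Matrix ι ι ℝ) (s : ℕ)
    (v wt w vt : ℕ → EuclideanSpace ℝ ι) : Prop :=
  (∀ k, IsArnoldiProj A s (v k) (wt k)) ∧
  (∀ k, w k = ‖wt k‖⁻¹ • wt k) ∧
  (∀ k, IsArnoldiProj Aᵀ s (w k) (vt (k + 1))) ∧
  (∀ k, v (k + 1) = ‖vt (k + 1)‖⁻¹ • vt (k + 1))

lemma inner_mulv {ι : Type*} [Fintype ι] (B : Matrix ι ι ℝ) (x y : EuclideanSpace ℝ ι) :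
    inner ℝ (mulv B x) y = (inner ℝ x (mulv Bᵀ y) : ℝ) := by
  simp only [mulv, PiLp.inner_apply, RCLike.inner_apply, starRingEnd_apply, star_trivial,
    WithLp.equiv_symm_apply, WithLp.equiv_apply, PiLp.toLp_apply, Matrix.mulVec, dotProduct,
    Matrix.transpose_apply, Finset.sum_mul, Finset.mul_sum]
  rw [Finset.sum_comm]
  congr 1; ext i; congr 1; ext j; ring

lemma mulv_smul {ι : Type*} [Fintype ι] (B : Matrix ι ι ℝ) (c : ℝ) (x : EuclideanSpace ℝ ι) :
    mulv B (c • x) = c • mulv B x := by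
  simp [mulv, Matrix.mulVec_smul, WithLp.equiv_symm_apply, WithLp.equiv_apply, WithLp.ofLp_smul, WithLp.toLp_smul]

lemma mem_krylov {ι : Type*} [Fintype ι] [DecidableEq ι] (A : Matrix ι ι ℝ) {s : ℕ}
    (v : EuclideanSpace ℝ ι) {i : ℕ} (hi : i < s) : mulv (A ^ i) v ∈ Krylov A s v :=
  Submodule.subset_span ⟨⟨i, hi⟩, rfl⟩

/-- Core identity for the Arnoldi cross iteration: `‖y‖ = ⟪z, x⟫`. -/
lemma key {ι : Type*} [Fintype ι] [DecidableEq ι] (A : Matrix ι ι ℝ) (s : ℕ)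
    (x y z : EuclideanSpace ℝ ι) (h1 : IsArnoldiProj A s x y) (hy : y ≠ 0)
    (h2 : IsArnoldiProj Aᵀ s (‖y‖⁻¹ • y) z) : ‖y‖ = inner ℝ z x := by
  have hyn : ‖y‖ ≠ 0 := norm_ne_zero_iff.2 hy
  set y' : EuclideanSpace ℝ ι := ‖y‖⁻¹ • y with hy'
  have orth : ∀ u ∈ Krylov Aᵀ s y', inner ℝ u x = (0 : ℝ) := by
    intro u hu
    refine Submodule.span_induction ?_ ?_ ?_ ?_ hu
    · rintro _ ⟨i, rfl⟩
      rw [inner_mulv]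
      have : (Aᵀ ^ (i : ℕ))ᵀ = A ^ (i : ℕ) := by
        rw [← Matrix.transpose_pow, Matrix.transpose_transpose]
      rw [this, hy', real_inner_smul_left]
      have h0 : inner ℝ y (mulv (A ^ (i : ℕ)) x) = (0 : ℝ) :=
        h1.2 _ (mem_krylov A x i.2)
      rw [h0, mul_zero]
    · simp
    · intro a b _ _ ha hb; rw [inner_add_left, ha, hb, add_zero]
    · intro c a _ ha; rw [real_inner_smul_left, ha, mul_zero]
  have e1 : (inner ℝ y y : ℝ) = inner ℝ y (mulv (A ^ s) x) := by
    have h0 : inner ℝ y (y - mulv (A ^ s) x) = (0 : ℝ) := h1.2 _ h1.1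
    rw [inner_sub_right] at h0; linarith
  have e2 : (inner ℝ y (mulv (A ^ s) x) : ℝ) = inner ℝ (mulv (Aᵀ ^ s) y) x := by
    rw [inner_mulv]
    congr 2
    rw [← Matrix.transpose_pow, Matrix.transpose_transpose]
  have e3 : mulv (Aᵀ ^ s) y = ‖y‖ • mulv (Aᵀ ^ s) y' := by
    rw [hy', mulv_smul, smul_smul, mul_inv_cancel₀ hyn, one_smul]
  have e4 : (inner ℝ (mulv (Aᵀ ^ s) y') x : ℝ) = inner ℝ z x := by
    have h0 := orth _ h2.1
    rw [inner_sub_left] at h0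
    linarith
  have e5 : ‖y‖ * ‖y‖ = ‖y‖ * inner ℝ z x := by
    rw [← real_inner_self_eq_norm_mul_norm, e1, e2, e3, real_inner_smul_left, e4]
  exact mul_left_cancel₀ hyn e5

/-- The step lemma packaging the inequality and the equality case. -/
lemma step {ι : Type*} [Fintype ι] [DecidableEq ι] (A : Matrix ι ι ℝ) (s : ℕ)
    (x y z : EuclideanSpace ℝ ι)
    (hx : ‖x‖ = 1) (h1 : IsArnoldiProj A s x y) (hy : y ≠ 0)
    (h2 : IsArnoldiProj Aᵀ s (‖y‖⁻¹ • y) z) :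
    z ≠ 0 ∧ ‖y‖ ≤ ‖z‖ ∧ (‖y‖ = ‖z‖ ↔ ∃ α : ℝ, α ≠ 0 ∧ x = α • (‖z‖⁻¹ • z)) := by
  have hypos : 0 < ‖y‖ := norm_pos_iff.2 hy
  have hk : ‖y‖ = inner ℝ z x := key A s x y z h1 hy h2
  have hle : ‖y‖ ≤ ‖z‖ := by
    calc ‖y‖ = inner ℝ z x := hk
    _ ≤ ‖z‖ * ‖x‖ := real_inner_le_norm z x
    _ = ‖z‖ := by rw [hx, mul_one]
  have hz : z ≠ 0 := by
    intro h0
    rw [h0, norm_zero] at hle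
    linarith
  have hzn : ‖z‖ ≠ 0 := norm_ne_zero_iff.2 hz
  refine ⟨hz, hle, ?_, ?_⟩
  · intro heq
    have : (inner ℝ z x : ℝ) = ‖z‖ * ‖x‖ := by rw [← hk, heq, hx, mul_one]
    have h3 : ‖x‖ • z = ‖z‖ • x := inner_eq_norm_mul_iff_real.1 this
    rw [hx, one_smul] at h3
    refine ⟨1, one_ne_zero, ?_⟩
    have h4 := congrArg (fun t => ‖z‖⁻¹ • t) h3
    simp only [smul_smul, inv_mul_cancel₀ hzn, one_smul] at h4
    rw [one_smul, ← h4]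
  · rintro ⟨α, hα, hxz⟩
    have hinner : (inner ℝ z x : ℝ) = α * ‖z‖⁻¹ * (‖z‖ * ‖z‖) := by
      rw [hxz, smul_smul, real_inner_smul_right, real_inner_self_eq_norm_mul_norm]
    have hsimp : (inner ℝ z x : ℝ) = α * ‖z‖ := by
      rw [hinner]; field_simp
    have hα1 : |α| = 1 := by
      have := hx
      rw [hxz, norm_smul, norm_smul, norm_inv, norm_norm, Real.norm_eq_abs,
        inv_mul_cancel₀ hzn, mul_one] at this
      exact this
    have hαpos : 0 < α := by
      by_contra hneg
      push_neg at hneg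
      have : (inner ℝ z x : ℝ) ≤ 0 := by
        rw [hsimp]
        exact mul_nonpos_of_nonpos_of_nonneg hneg (norm_nonneg z)
      linarith [hk ▸ this, hypos]
    have : α = 1 := by rw [abs_of_pos hαpos] at hα1; exact hα1
    rw [hk, hsimp, this, one_mul]

/-- If the grade of `v` is at least `s+1` then the Arnoldi projection is nonzero. -/
lemma proj_ne_zero {ι : Type*} [Fintype ι] [DecidableEq ι] (A : Matrix ι ι ℝ) (s : ℕ)
    (hs1 : 1 ≤ s) (v y : EuclideanSpace ℝ ι)
    (hg : s + 1 ≤ vgrade A v) (h1 : IsArnoldiProj A s v y) : y ≠ 0 := by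
  intro h0
  have hmem : mulv (A ^ s) v ∈ Krylov A s v := by
    have := h1.1
    rw [h0, zero_sub] at this
    simpa using (Krylov A s v).neg_mem this
  rw [Krylov, Submodule.mem_span_range_iff_exists_fun] at hmem
  obtain ⟨c, hc⟩ := hmem
  set r : ℝ[X] := ∑ i : Fin s, C (c i) * X ^ (i : ℕ) with hr
  set p : ℝ[X] := X ^ s - r with hp
  have hrdeg : r.natDegree < s := by
    have : r.natDegree ≤ s - 1 := by
      apply Polynomial.natDegree_sum_le_of_forall_le
      intro i _
      exact le_trans (Polynomial.natDegree_C_mul_X_pow_le (c i) i) (by omega)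
    omega
  have hpdeg : p.natDegree = s := by
    rw [hp]
    rw [Polynomial.natDegree_sub_eq_left_of_natDegree_lt (by simpa using hrdeg)]
    simp
  have hpne : p ≠ 0 := by
    intro h; rw [h, Polynomial.natDegree_zero] at hpdeg; omega
  let L : Matrix ι ι ℝ →ₗ[ℝ] EuclideanSpace ℝ ι :=
    { toFun := fun M => mulv M v
      map_add' := fun M N => by
        simp [mulv, Matrix.add_mulVec]
      map_smul' := fun c M => by
        simp [mulv, Matrix.smul_mulVec, WithLp.equiv_symm_apply, WithLp.equiv_apply, WithLp.ofLp_smul, WithLp.toLp_smul] }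
  have heval : mulv (aeval A p) v = 0 := by
    have : aeval A p = A ^ s - ∑ i : Fin s, c i • A ^ (i : ℕ) := by
      rw [hp, hr]
      simp [Algebra.algebraMap_eq_smul_one, smul_mul_assoc]
    show L (aeval A p) = 0
    rw [this, map_sub, map_sum]
    have h5 : L (A ^ s) = mulv (A ^ s) v := rfl
    rw [h5, ← hc, sub_eq_zero]
    exact Finset.sum_congr rfl fun i _ => by rw [_root_.map_smul]; rfl
  have : vgrade A v ≤ s := Nat.sInf_le ⟨p, hpne, hpdeg, heval⟩
  omega

theorem aci_monotone {n : ℕ} (A : Matrix (Fin n) (Fin n) ℝ) (s : ℕ)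
    (hs1 : 1 ≤ s) (hs2 : s < dmin A)
    (v wt w vt : ℕ → EuclideanSpace ℝ (Fin n))
    (hv0 : ‖v 0‖ = 1) (hg : s + 1 ≤ vgrade A (v 0))
    (haci : ACI A s v wt w vt) :
    (∀ k, wt k ≠ 0 ∧ vt (k + 1) ≠ 0) ∧
    (∀ k, ‖wt k‖ ≤ ‖vt (k + 1)‖ ∧ ‖vt (k + 1)‖ ≤ ‖wt (k + 1)‖ ∧
      (‖wt k‖ = ‖vt (k + 1)‖ ↔ ∃ α : ℝ, α ≠ 0 ∧ v k = α • v (k + 1))) := by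
  obtain ⟨h1, h2, h3, h4⟩ := haci
  have h3' : ∀ k, IsArnoldiProj Aᵀ s (‖wt k‖⁻¹ • wt k) (vt (k + 1)) := by
    intro k; rw [← h2 k]; exact h3 k
  have h1' : ∀ k, IsArnoldiProj Aᵀᵀ s (‖vt (k + 1)‖⁻¹ • vt (k + 1)) (wt (k + 1)) := by
    intro k; rw [Matrix.transpose_transpose, ← h4 k]; exact h1 (k + 1)
  have hP : ∀ k, ‖v k‖ = 1 ∧ wt k ≠ 0 := by
    intro k
    induction k with
    | zero => exact ⟨hv0, proj_ne_zero A s hs1 (v 0) (wt 0) hg (h1 0)⟩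
    | succ k ih =>
      obtain ⟨hvk, hwk⟩ := ih
      obtain ⟨hvt, -, -⟩ := step A s (v k) (wt k) (vt (k + 1)) hvk (h1 k) hwk (h3' k)
      have hv1 : ‖v (k + 1)‖ = 1 := by
        rw [h4 k]; exact norm_smul_inv_norm (𝕜 := ℝ) hvt
      have hwk1 : ‖w k‖ = 1 := by
        rw [h2 k]; exact norm_smul_inv_norm (𝕜 := ℝ) hwk
      obtain ⟨hwt1, -, -⟩ :=
        step Aᵀ s (w k) (vt (k + 1)) (wt (k + 1)) hwk1 (h3 k) hvt (h1' k)
      exact ⟨hv1, hwt1⟩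
  constructor
  · intro k
    obtain ⟨hvk, hwk⟩ := hP k
    obtain ⟨hvt, -, -⟩ := step A s (v k) (wt k) (vt (k + 1)) hvk (h1 k) hwk (h3' k)
    exact ⟨hwk, hvt⟩
  · intro k
    obtain ⟨hvk, hwk⟩ := hP k
    obtain ⟨hvt, hle1, hiff⟩ := step A s (v k) (wt k) (vt (k + 1)) hvk (h1 k) hwk (h3' k)
    have hwk1 : ‖w k‖ = 1 := by
      rw [h2 k]; exact norm_smul_inv_norm (𝕜 := ℝ) hwk
    obtain ⟨-, hle2, -⟩ :=
      step Aᵀ s (w k) (vt (k + 1)) (wt (k + 1)) hwk1 (h3 k) hvt (h1' k)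
    refine ⟨hle1, hle2, ?_⟩
    rw [h4 k]
    exact hiff
end
end

section
/- Let A = diag(λ₁,...,λₙ) ∈ ℝ^{n×n} with λ₁ < λ₂ < ⋯ < λₙ, and let v₀ be a unit vector with d(A,v₀) ≥ 2. Consider the iteration ṽ_{k+1} = (A − ρ_k I)v_k with ρ_k = v_kᵀ A v_k, v_{k+1} = ṽ_{k+1}/‖ṽ_{k+1}‖. Then the sequence of even-indexed iterates {v_{2k}} converges to a single limit vector. -/
open Polynomial Filter Topology Matrix

noncomputable section

open scoped RealInnerProductSpace

set_option maxHeartbeats 1000000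

variable {n : ℕ}

lemma mulv_diag_apply (lam : Fin n → ℝ) (x : EuclideanSpace ℝ (Fin n)) (i : Fin n) :
    mulv (Matrix.diagonal lam) x i = lam i * x i := by
  simp [mulv, Matrix.mulVec_diagonal]

lemma mulv_zero' (lam : Fin n → ℝ) : mulv (Matrix.diagonal lam) (0 : EuclideanSpace ℝ (Fin n)) = 0 := by
  simp [mulv]

lemma inner_euc (x y : EuclideanSpace ℝ (Fin n)) : ⟪x, y⟫ = ∑ i, x i * y i := by
  simp [PiLp.inner_apply, RCLike.inner_apply, conj_trivial]
  exact Finset.sum_congr rfl fun i _ => mul_comm _ _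

lemma norm_sq_euc (x : EuclideanSpace ℝ (Fin n)) : ‖x‖^2 = ∑ i, (x i)^2 := by
  rw [← real_inner_self_eq_norm_sq, inner_euc]
  simp [pow_two]

lemma continuous_mulv_diag (lam : Fin n → ℝ) :
    Continuous (fun x : EuclideanSpace ℝ (Fin n) => mulv (Matrix.diagonal lam) x) := by
  have : Continuous (fun x : EuclideanSpace ℝ (Fin n) => (fun i => lam i * x i : Fin n → ℝ)) := by
    exact continuous_pi fun i => continuous_const.mul ((continuous_apply i).comp
      (PiLp.continuous_ofLp 2 (fun _ : Fin n => ℝ)))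
  have h2 := (PiLp.continuous_toLp 2 (fun _ : Fin n => ℝ)).comp this
  convert h2 using 2 with x
  ext i
  simp [mulv, Matrix.mulVec_diagonal]

lemma mulv_symm (lam : Fin n → ℝ) (x y : EuclideanSpace ℝ (Fin n)) :
    ⟪mulv (Matrix.diagonal lam) x, y⟫ = ⟪x, mulv (Matrix.diagonal lam) y⟫ := by
  rw [inner_euc, inner_euc]
  congr 1; ext i
  rw [mulv_diag_apply, mulv_diag_apply]; ring


theorem aux_converge {X : Type*} [MetricSpace X] {s : Set X} (hs : IsCompact s)
    {u : ℕ → X} (hu : ∀ k, u k ∈ s)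
    (hfin : {w | MapClusterPt w atTop u}.Finite)
    (hstep : Tendsto (fun k => dist (u (k+1)) (u k)) atTop (𝓝 0)) :
    ∃ w, Tendsto u atTop (𝓝 w) := by
  set C := {w | MapClusterPt w atTop u} with hC
  have hCne : C.Nonempty := by
    obtain ⟨x, hxs, hx⟩ := hs.exists_clusterPt (f := Filter.map u atTop)
      (le_principal_iff.mpr (Filter.mem_map.mpr (by
        filter_upwards [Filter.eventually_atTop.mpr ⟨0, fun k _ => hu k⟩] with k hk using hk)))
    exact ⟨x, hx⟩
  have hdist : ∀ ε > (0:ℝ), ∀ᶠ k in atTop, ∃ w ∈ C, dist (u k) w < ε := by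
    intro ε hε
    by_contra hcon
    rw [Filter.not_eventually] at hcon
    have hcon' : ∃ᶠ k in atTop, u k ∈ s ∩ ⋂ w ∈ C, {x | ε ≤ dist x w} := by
      refine hcon.mono fun k hk => ⟨hu k, ?_⟩
      simp only [Set.mem_iInter, Set.mem_setOf_eq]
      intro w hw
      by_contra h
      exact hk ⟨w, hw, by linarith [not_le.mp h]⟩
    have hT : IsCompact (s ∩ ⋂ w ∈ C, {x | ε ≤ dist x w}) := by
      refine hs.inter_right (isClosed_biInter fun w _ => ?_)
      exact isClosed_le continuous_const (continuous_id.dist continuous_const)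
    obtain ⟨a, ha, φ, hφ, hlim⟩ := hT.isSeqCompact.subseq_of_frequently_in hcon'
    have haC : a ∈ C := MapClusterPt.of_comp (hφ.tendsto_atTop) hlim.mapClusterPt
    have h2 := ha.2
    simp only [Set.mem_iInter, Set.mem_setOf_eq] at h2
    have := h2 a haC
    simp at this
    linarith
  by_cases hsub : C.Subsingleton
  · obtain ⟨w, hw⟩ := hCne
    refine ⟨w, Metric.tendsto_atTop.mpr fun ε hε => ?_⟩
    obtain ⟨N, hN⟩ := Filter.eventually_atTop.mp (hdist ε hε)
    refine ⟨N, fun k hk => ?_⟩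
    obtain ⟨w', hw', hd⟩ := hN k hk
    rwa [hsub hw' hw] at hd
  · obtain ⟨a, ha, b, hb, hab⟩ := Set.not_subsingleton_iff.mp hsub
    -- minimal pairwise distance δ
    classical
    set F := hfin.toFinset with hF
    set P := (F ×ˢ F).filter (fun p => p.1 ≠ p.2) with hP
    have hPne : P.Nonempty := ⟨(a, b), by
      simp only [hP, Finset.mem_filter, Finset.mem_product, hF, Set.Finite.mem_toFinset]
      exact ⟨⟨ha, hb⟩, hab⟩⟩
    set δ := P.inf' hPne (fun p => dist p.1 p.2) with hδ
    have hδpos : 0 < δ := by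
      rw [hδ, Finset.lt_inf'_iff]
      intro p hp
      simp only [hP, Finset.mem_filter] at hp
      exact dist_pos.mpr hp.2
    have hδle : ∀ x ∈ C, ∀ y ∈ C, x ≠ y → δ ≤ dist x y := by
      intro x hx y hy hxy
      refine Finset.inf'_le (fun p => dist p.1 p.2) (b := (x,y)) ?_
      simp only [hP, Finset.mem_filter, Finset.mem_product, hF, Set.Finite.mem_toFinset]
      exact ⟨⟨hx, hy⟩, hxy⟩
    have key : ∀ ε : ℝ, 0 < ε → 4*ε ≤ δ → ∀ N, ∀ w ∈ C,
        (∀ k ≥ N, dist (u (k+1)) (u k) < ε) → (∀ k ≥ N, ∃ w' ∈ C, dist (u k) w' < ε) →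
        dist (u N) w < ε → ∀ k ≥ N, dist (u k) w < ε := by
      intro ε hε hε4 N w hwC hst hcl h0 k hk
      induction k, hk using Nat.le_induction with
      | base => exact h0
      | succ k hk ih =>
        obtain ⟨w', hw'C, hw'⟩ := hcl (k+1) (by omega)
        have h1 := hst k hk
        have h2 := dist_triangle (u (k+1)) (u k) w
        have h3 : w' = w := by
          by_contra hne
          have h4 := hδle w' hw'C w hwC hne
          have h5 := dist_triangle w' (u (k+1)) w
          have h6 : dist w' (u (k+1)) = dist (u (k+1)) w' := dist_comm _ _
          linarith
        rw [← h3]; exact hw'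
    have main : ∀ ε : ℝ, 0 < ε → 4*ε ≤ δ → ∃ N, ∃ w ∈ C, ∀ k ≥ N, dist (u k) w < ε := by
      intro ε hε hε4
      obtain ⟨N1, hN1⟩ := Filter.eventually_atTop.mp (hdist ε hε)
      obtain ⟨N2, hN2⟩ := Filter.eventually_atTop.mp
        (hstep.eventually_lt_const hε)
      set N := max N1 N2 with hN
      obtain ⟨w, hwC, hw⟩ := hN1 N (le_max_left _ _)
      refine ⟨N, w, hwC, key ε hε hε4 N w hwC (fun k hk => hN2 k (le_trans (le_max_right _ _) hk))
        (fun k hk => hN1 k (le_trans (le_max_left _ _) hk)) hw⟩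
    obtain ⟨N0, w0, hw0C, hw0⟩ := main (δ/5) (by linarith) (by linarith)
    have hT : Tendsto u atTop (𝓝 w0) := by
      rw [Metric.tendsto_atTop]
      intro ε hε
      obtain ⟨N, w, hwC, hw⟩ := main (min ε (δ/5)) (lt_min hε (by linarith)) (by
        have := min_le_right ε (δ/5); linarith)
      have hww0 : w = w0 := by
        by_contra hne
        have h1 := hw (max N N0) (le_max_left _ _)
        have h2 := hw0 (max N N0) (le_max_right _ _)
        have h3 := hδle w hwC w0 hw0C hne
        have h4 := dist_triangle w (u (max N N0)) w0
        have h5 : dist w (u (max N N0)) = dist (u (max N N0)) w := dist_comm _ _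
        have h6 := min_le_right ε (δ/5)
        linarith
      refine ⟨max N N0, fun k hk => ?_⟩
      have := hw k (le_trans (le_max_left _ _) hk)
      rw [hww0] at this
      exact lt_of_lt_of_le this (min_le_left _ _)
    exact ⟨w0, hT⟩

theorem steepest_descent_even_converges' (lam : Fin n → ℝ) (hlam : StrictMono lam)
    (v vt : ℕ → EuclideanSpace ℝ (Fin n)) (hv0 : ‖v 0‖ = 1)
    (hstep : ∀ k, vt (k + 1) = mulv (Matrix.diagonal lam) (v k) -
      (inner ℝ (v k) (mulv (Matrix.diagonal lam) (v k)) : ℝ) • v k)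
    (hnorm : ∀ k, v (k + 1) = ‖vt (k + 1)‖⁻¹ • vt (k + 1)) :
    ∃ vstar : EuclideanSpace ℝ (Fin n), Tendsto (fun k => v (2 * k)) atTop (𝓝 vstar) := by
  classical
  -- n positive
  rcases Nat.eq_zero_or_pos n with hn | hn
  · subst hn
    have : (v 0) = 0 := Subsingleton.elim _ _
    rw [this, norm_zero] at hv0
    norm_num at hv0
  by_cases hzero : ∃ k, vt (k + 1) = 0
  · -- degenerate case: sequence eventually zero
    obtain ⟨k0, hk0⟩ := hzero
    have hz : ∀ m, v (k0 + 1 + m) = 0 := by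
      intro m
      induction m with
      | zero => simpa [hk0] using hnorm k0
      | succ m ih =>
        have hvt : vt (k0 + 1 + m + 1) = 0 := by
          rw [hstep (k0 + 1 + m), ih, mulv_zero']
          simp
        have := hnorm (k0 + 1 + m)
        rw [hvt] at this
        rw [← add_assoc]; simpa using this
    refine ⟨0, ?_⟩
    have hev : ∀ᶠ m in atTop, v (2 * m) = 0 := by
      filter_upwards [Filter.eventually_ge_atTop (k0 + 1)] with m hm
      have : 2 * m = k0 + 1 + (2 * m - (k0 + 1)) := by omega
      rw [this]; exact hz _
    exact Tendsto.congr' (by filter_upwards [hev] with m hm using hm.symm) tendsto_const_nhds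
  · push_neg at hzero
    set D := fun x : EuclideanSpace ℝ (Fin n) => mulv (Matrix.diagonal lam) x with hD
    set ρ := fun x : EuclideanSpace ℝ (Fin n) => (⟪x, D x⟫ : ℝ) with hρ
    set r := fun x : EuclideanSpace ℝ (Fin n) => D x - ρ x • x with hr
    have hrapp : ∀ x i, r x i = (lam i - ρ x) * x i := by
      intro x i
      simp only [hr, hD, PiLp.sub_apply, PiLp.smul_apply, smul_eq_mul]
      rw [mulv_diag_apply]; ring
    have hvtr : ∀ k, vt (k + 1) = r (v k) := fun k => hstep k
    have hunit : ∀ k, ‖v k‖ = 1 := by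
      intro k
      induction k with
      | zero => exact hv0
      | succ k _ =>
        rw [hnorm k, norm_smul, norm_inv, norm_norm]
        exact inv_mul_cancel₀ (norm_ne_zero_iff.mpr (hzero k))
    set σ : ℕ → ℝ := fun k => ‖vt (k + 1)‖ with hσ
    have hσpos : ∀ k, 0 < σ k := fun k => norm_pos_iff.mpr (hzero k)
    -- orthogonality of consecutive iterates
    have horth : ∀ k, ⟪v k, vt (k + 1)⟫ = 0 := by
      intro k
      rw [hvtr k, hr]
      simp only [inner_sub_right, inner_smul_right, real_inner_self_eq_norm_sq, hunit k]
      simp [hρ]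
    -- key identity
    have hkey : ∀ k, ⟪v k, vt (k + 2)⟫ = σ k := by
      intro k
      have h1 : vt (k + 2) = D (v (k+1)) - ρ (v (k+1)) • v (k+1) := hstep (k+1)
      rw [h1, inner_sub_right, inner_smul_right]
      have h2 : ⟪v k, v (k+1)⟫ = 0 := by
        rw [hnorm k, inner_smul_right, horth k, mul_zero]
      rw [h2, mul_zero, sub_zero]
      have hsy : ⟪v k, D (v (k+1))⟫ = ⟪D (v k), v (k+1)⟫ := (mulv_symm lam (v k) (v (k+1))).symm
      rw [hsy]
      have h3 : D (v k) = vt (k+1) + ρ (v k) • v k := by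
        rw [hvtr k]; simp only [hr]; abel
      calc ⟪D (v k), v (k+1)⟫ = ⟪vt (k+1) + ρ (v k) • v k, v (k+1)⟫ := by rw [h3]
        _ = ⟪vt (k+1), v (k+1)⟫ + ρ (v k) * ⟪v k, v (k+1)⟫ := by
            rw [inner_add_left, inner_smul_left]; norm_num
        _ = σ k := by
            rw [h2, mul_zero, add_zero, hnorm k, inner_smul_right,
              real_inner_self_eq_norm_sq, sq,
              inv_mul_cancel_left₀ (norm_ne_zero_iff.mpr (hzero k))]
    have hmono : Monotone σ := by
      apply monotone_nat_of_le_succ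
      intro k
      have h1 := hkey k
      have h2 : ⟪v k, vt (k + 2)⟫ ≤ ‖v k‖ * ‖vt (k + 2)‖ := real_inner_le_norm _ _
      rw [hunit k, one_mul] at h2
      rw [h1] at h2
      exact h2
    -- bound on σ
    obtain ⟨i0, hi0⟩ : ∃ i : Fin n, True := ⟨⟨0, hn⟩, trivial⟩
    set L : ℝ := Finset.univ.sup' ⟨i0, Finset.mem_univ i0⟩ (fun i => |lam i|) with hL
    have hLmem : ∀ i, |lam i| ≤ L := fun i => by rw [hL]; exact Finset.le_sup' (fun j => |lam j|) (Finset.mem_univ i)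
    have hL0 : 0 ≤ L := le_trans (abs_nonneg _) (hLmem i0)
    have hDle : ∀ x : EuclideanSpace ℝ (Fin n), ‖D x‖ ≤ L * ‖x‖ := by
      intro x
      have h1 : ‖D x‖^2 ≤ (L * ‖x‖)^2 := by
        rw [norm_sq_euc, mul_pow, norm_sq_euc, Finset.mul_sum]
        refine Finset.sum_le_sum fun i _ => ?_
        have hDxi : D x i = lam i * x i := mulv_diag_apply lam x i
        rw [hDxi, mul_pow]
        have h1 : lam i ^ 2 ≤ L ^ 2 := by
          rw [← sq_abs]; exact pow_le_pow_left₀ (abs_nonneg _) (hLmem i) 2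
        exact mul_le_mul_of_nonneg_right h1 (sq_nonneg _)
      have h2 := Real.sqrt_le_sqrt h1
      rwa [Real.sqrt_sq (norm_nonneg _), Real.sqrt_sq (by positivity)] at h2
    have hσbdd : ∀ k, σ k ≤ 2 * L := by
      intro k
      have h1 : σ k = ‖r (v k)‖ := by rw [hσ]; simp only [hvtr]
      have h2 : ‖r (v k)‖ ≤ ‖D (v k)‖ + ‖ρ (v k) • v k‖ := norm_sub_le _ _
      have h3 : ‖D (v k)‖ ≤ L := by
        have := hDle (v k); rwa [hunit k, mul_one] at this
      have h4 : ‖ρ (v k) • v k‖ ≤ L := by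
        rw [norm_smul, hunit k, mul_one]
        have h5 : |ρ (v k)| ≤ ‖v k‖ * ‖D (v k)‖ := abs_real_inner_le_norm _ _
        rw [hunit k, one_mul] at h5
        exact le_trans h5 h3
      rw [h1]; simp only [Real.norm_eq_abs] at *; linarith
    set τ : ℝ := ⨆ k, σ k with hτ
    have hbdd : BddAbove (Set.range σ) := ⟨2 * L, by rintro x ⟨k, rfl⟩; exact hσbdd k⟩
    have hστ : Tendsto σ atTop (𝓝 τ) := tendsto_atTop_ciSup hmono hbdd
    have hτpos : 0 < τ := lt_of_lt_of_le (hσpos 0) (le_ciSup hbdd 0)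
    have hσleτ : ∀ k, σ k ≤ τ := fun k => le_ciSup hbdd k
    -- inner product of two-step iterates
    have hinner2 : ∀ k, ⟪v (k + 2), v k⟫ = σ k / σ (k + 1) := by
      intro k
      have h1 : v (k + 2) = ‖vt (k + 2)‖⁻¹ • vt (k + 2) := hnorm (k + 1)
      rw [h1, inner_smul_left]
      rw [real_inner_comm, hkey k]
      simp only [conj_trivial]
      rw [div_eq_inv_mul]
    -- distance between two-step iterates tends to zero (over even indices)
    have hdiff : Tendsto (fun m => dist (v (2 * (m+1))) (v (2 * m))) atTop (𝓝 0) := by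
      have hsq : ∀ k, dist (v (k + 2)) (v k) ^ 2 = 2 - 2 * (σ k / σ (k + 1)) := by
        intro k
        rw [dist_eq_norm, norm_sub_sq_real, hinner2 k, hunit, hunit]
        ring
      have h2m : Tendsto (fun m => 2 * m) atTop atTop :=
        tendsto_atTop.mpr fun b => eventually_atTop.mpr ⟨b, fun m hm => by omega⟩
      have h2m1 : Tendsto (fun m => 2 * m + 1) atTop atTop :=
        tendsto_atTop.mpr fun b => eventually_atTop.mpr ⟨b, fun m hm => by omega⟩
      have hratio : Tendsto (fun m => σ (2 * m) / σ (2 * m + 1)) atTop (𝓝 1) := by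
        have := Tendsto.div (hστ.comp h2m) (hστ.comp h2m1) (ne_of_gt hτpos)
        rw [div_self (ne_of_gt hτpos)] at this; exact this
      have hsq0 : Tendsto (fun m => dist (v (2 * (m+1))) (v (2 * m)) ^ 2) atTop (𝓝 0) := by
        have heq : (fun m => dist (v (2 * (m+1))) (v (2 * m)) ^ 2)
            = fun m => 2 - 2 * (σ (2 * m) / σ (2 * m + 1)) := by
          funext m
          have : 2 * (m + 1) = 2 * m + 2 := by ring
          rw [this, hsq (2 * m)]
        rw [heq]
        have h5 : Tendsto (fun m => 2 - 2 * (σ (2 * m) / σ (2 * m + 1))) atTop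
            (𝓝 (2 - 2 * 1)) := tendsto_const_nhds.sub (hratio.const_mul 2)
        simpa using h5
      have : Tendsto (fun m => Real.sqrt (dist (v (2 * (m+1))) (v (2 * m)) ^ 2)) atTop (𝓝 0) := by
        have hc : ContinuousAt Real.sqrt 0 := Real.continuous_sqrt.continuousAt
        have := hc.tendsto.comp hsq0
        rw [Real.sqrt_zero] at this; exact this
      refine this.congr fun m => ?_
      exact Real.sqrt_sq dist_nonneg
    -- continuity
    have hDcont : Continuous D := continuous_mulv_diag lam
    have hρcont : Continuous ρ := by rw [hρ]; exact continuous_id.inner hDcont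
    have hrcont : Continuous r := by rw [hr]; exact hDcont.sub (hρcont.smul continuous_id)
    set u : ℕ → EuclideanSpace ℝ (Fin n) := fun m => v (2 * m) with hu
    set C := {w | MapClusterPt w atTop u} with hC
    set Q : Fin n → Fin n → ℝ[X] := fun i j =>
      Polynomial.C ((lam i - lam j)^2) * (Polynomial.X^2 - Polynomial.X^4) -
        Polynomial.C (τ^2) with hQ
    have hQne : ∀ i j, i ≠ j → Q i j ≠ 0 := by
      intro i j hij h
      have hc := congrArg (fun p => Polynomial.coeff p 4) h
      simp only [hQ, Polynomial.coeff_sub, Polynomial.coeff_C_mul, Polynomial.coeff_C,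
        Polynomial.coeff_zero, Polynomial.coeff_X_pow] at hc
      norm_num at hc
      exact (sub_ne_zero.mpr (hlam.injective.ne hij)) hc
    set K : Set (EuclideanSpace ℝ (Fin n)) :=
      ⋃ p ∈ {p : Fin n × Fin n | p.1 ≠ p.2},
        (fun ab : ℝ × ℝ =>
          (EuclideanSpace.single p.1 ab.1 + EuclideanSpace.single p.2 ab.2 :
            EuclideanSpace ℝ (Fin n)))
          '' ({α | (Q p.1 p.2).IsRoot α} ×ˢ {β | (Q p.1 p.2).IsRoot β}) with hK
    have hKfin : K.Finite := by
      refine Set.Finite.biUnion (Set.toFinite _) fun p hp => ?_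
      exact ((Polynomial.finite_setOf_isRoot (hQne p.1 p.2 hp)).prod
        (Polynomial.finite_setOf_isRoot (hQne p.1 p.2 hp))).image _
    have hCsub : C ⊆ K := by
      intro w hw
      obtain ⟨ψ, hψ, hψlim⟩ := TopologicalSpace.FirstCountableTopology.tendsto_subseq hw
      set t : ℕ → ℕ := fun l => 2 * ψ l with ht
      have htat : Tendsto t atTop atTop := tendsto_atTop.mpr fun b =>
        eventually_atTop.mpr ⟨b, fun l hl => by
          have h2 : l ≤ ψ l := hψ.le_apply
          have h1 : ψ l ≤ 2 * ψ l := by omega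
          calc b ≤ l := hl
            _ ≤ ψ l := h2
            _ ≤ 2 * ψ l := h1
            _ = t l := by rw [ht]⟩
      have ht1 : Tendsto (fun l => t l + 1) atTop atTop := by
        rw [tendsto_atTop] at htat ⊢
        intro b
        filter_upwards [htat b] with l hl
        omega
      have hvt_lim : Tendsto (fun l => v (t l)) atTop (𝓝 w) := hψlim
      have hτne : τ ≠ 0 := ne_of_gt hτpos
      have hw1 : ‖w‖ = 1 := by
        have h1 : Tendsto (fun l => ‖v (t l)‖) atTop (𝓝 ‖w‖) :=
          (continuous_norm.tendsto w).comp hvt_lim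
        have heq : (fun l => ‖v (t l)‖) = fun _ => (1:ℝ) := funext fun l => hunit _
        rw [heq] at h1
        exact tendsto_nhds_unique h1 tendsto_const_nhds
      have hσt : Tendsto (fun l => σ (t l)) atTop (𝓝 τ) := hστ.comp htat
      have hσt1 : Tendsto (fun l => σ (t l + 1)) atTop (𝓝 τ) := hστ.comp ht1
      have hrlim : Tendsto (fun l => r (v (t l))) atTop (𝓝 (r w)) :=
        (hrcont.tendsto w).comp hvt_lim
      have hrw : ‖r w‖ = τ := by
        have h1 : Tendsto (fun l => ‖r (v (t l))‖) atTop (𝓝 ‖r w‖) :=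
          (continuous_norm.tendsto _).comp hrlim
        have h2 : (fun l => ‖r (v (t l))‖) = fun l => σ (t l) := by
          funext l; simp only [hσ, hvtr]
        rw [h2] at h1
        exact tendsto_nhds_unique h1 hσt
      set w' := τ⁻¹ • r w with hw'
      have hv1lim : Tendsto (fun l => v (t l + 1)) atTop (𝓝 w') := by
        have h1 : ∀ l, v (t l + 1) = (σ (t l))⁻¹ • r (v (t l)) := fun l => by
          rw [hnorm (t l)]; simp only [hσ, hvtr]
        rw [funext h1, hw']
        exact Tendsto.smul (hσt.inv₀ hτne) hrlim
      have hrw'lim : Tendsto (fun l => r (v (t l + 1))) atTop (𝓝 (r w')) :=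
        (hrcont.tendsto _).comp hv1lim
      have hrw' : ‖r w'‖ = τ := by
        have h1 : Tendsto (fun l => ‖r (v (t l + 1))‖) atTop (𝓝 ‖r w'‖) :=
          (continuous_norm.tendsto _).comp hrw'lim
        have h2 : (fun l => ‖r (v (t l + 1))‖) = fun l => σ (t l + 1) := by
          funext l; simp only [hσ, hvtr]
        rw [h2] at h1
        exact tendsto_nhds_unique h1 hσt1
      set w'' := τ⁻¹ • r w' with hw''
      have hv2lim : Tendsto (fun l => v (t l + 2)) atTop (𝓝 w'') := by
        have h1 : ∀ l, v (t l + 2) = (σ (t l + 1))⁻¹ • r (v (t l + 1)) := fun l => by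
          rw [hnorm (t l + 1)]; simp only [hσ, hvtr]
        rw [funext h1, hw'']
        exact Tendsto.smul (hσt1.inv₀ hτne) hrw'lim
      have hw''1 : ‖w''‖ = 1 := by
        have h1 : Tendsto (fun l => ‖v (t l + 2)‖) atTop (𝓝 ‖w''‖) :=
          (continuous_norm.tendsto _).comp hv2lim
        have heq : (fun l => ‖v (t l + 2)‖) = fun _ => (1:ℝ) := funext fun l => hunit _
        rw [heq] at h1
        exact tendsto_nhds_unique h1 tendsto_const_nhds
      have hinn : ⟪w'', w⟫ = 1 := by
        have h1 : Tendsto (fun l => ⟪v (t l + 2), v (t l)⟫) atTop (𝓝 ⟪w'', w⟫) :=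
          hv2lim.inner hvt_lim
        have h2 : (fun l => (⟪v (t l + 2), v (t l)⟫ : ℝ)) = fun l => σ (t l) / σ (t l + 1) :=
          funext fun l => hinner2 (t l)
        rw [h2] at h1
        have h3 : Tendsto (fun l => σ (t l) / σ (t l + 1)) atTop (𝓝 1) := by
          have := hσt.div hσt1 hτne
          rw [div_self hτne] at this; exact this
        exact tendsto_nhds_unique h1 h3
      have hww : w'' = w := by
        have h1 : ‖w'' - w‖^2 = 0 := by
          rw [norm_sub_sq_real, hinn, hw''1, hw1]; norm_num
        exact sub_eq_zero.mp (norm_eq_zero.mp (pow_eq_zero_iff two_ne_zero |>.mp h1))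
      -- coordinate equations
      have hcoord : ∀ i, ((lam i - ρ w') * (lam i - ρ w) - τ^2) * w i = 0 := by
        intro i
        have h2 : w' i = τ⁻¹ * ((lam i - ρ w) * w i) := by
          rw [hw']
          simp only [PiLp.smul_apply, smul_eq_mul]
          rw [hrapp]
        have h1 : w i = τ⁻¹ * ((lam i - ρ w') * w' i) := by
          conv_lhs => rw [← hww]
          rw [hw'']
          simp only [PiLp.smul_apply, smul_eq_mul]
          rw [hrapp]
        rw [h2] at h1
        field_simp at h1
        linear_combination -h1
      have hsupp_ne : ∃ i, w i ≠ 0 := by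
        by_contra h
        push_neg at h
        have hzw : w = 0 := by
          ext i; exact h i
        rw [hzw, norm_zero] at hw1
        norm_num at hw1
      have hquad : ∀ i, w i ≠ 0 → (lam i - ρ w') * (lam i - ρ w) = τ^2 := by
        intro i hi
        rcases mul_eq_zero.mp (hcoord i) with h | h
        · linarith [h]
        · exact absurd h hi
      have hpairsum : ∀ i j, w i ≠ 0 → w j ≠ 0 → i ≠ j →
          lam i + lam j = ρ w + ρ w' := by
        intro i j hi hj hij
        have h1 := hquad i hi
        have h2 := hquad j hj
        have h3 : lam i - lam j ≠ 0 := sub_ne_zero.mpr (hlam.injective.ne hij)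
        have h4 : (lam i - lam j) * (lam i + lam j - (ρ w + ρ w')) = 0 := by
          linear_combination h1 - h2
        rcases mul_eq_zero.mp h4 with h | h
        · exact absurd h h3
        · linarith
      have hρsum : ∀ x : EuclideanSpace ℝ (Fin n), ρ x = ∑ l, lam l * (x l)^2 := by
        intro x
        show ⟪x, D x⟫ = _
        rw [inner_euc]
        refine Finset.sum_congr rfl fun l _ => ?_
        rw [show D x l = lam l * x l from mulv_diag_apply lam x l]
        ring
      obtain ⟨i, hi⟩ := hsupp_ne
      by_cases hsing : ∀ j, j ≠ i → w j = 0
      · exfalso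
        have hwi1 : (w i)^2 = 1 := by
          have h1 := norm_sq_euc w
          rw [hw1] at h1
          norm_num at h1
          rw [Finset.sum_eq_single i (fun b _ hb => by simp [hsing b hb])
            (fun h => absurd (Finset.mem_univ i) h)] at h1
          linarith
        have hρw : ρ w = lam i := by
          rw [hρsum w, Finset.sum_eq_single i (fun b _ hb => by simp [hsing b hb])
            (fun h => absurd (Finset.mem_univ i) h), hwi1, mul_one]
        have hr0 : r w = 0 := by
          ext l
          rw [hrapp]
          by_cases hl : l = i
          · subst hl; rw [hρw]; ring_nf; simp
          · rw [hsing l hl]; ring_nf; simp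
        rw [hr0, norm_zero] at hrw
        exact hτne hrw.symm
      · push_neg at hsing
        obtain ⟨j, hji, hj⟩ := hsing
        have hij : i ≠ j := fun h => hji h.symm
        have hothers : ∀ l, l ≠ i → l ≠ j → w l = 0 := by
          intro l hli hlj
          by_contra hl
          have e1 := hpairsum l i hl hi hli
          have e2 := hpairsum l j hl hj hlj
          exact hji (hlam.injective (by linarith : lam j = lam i))
        have hpairs : ∀ f : Fin n → ℝ, (∀ l, l ≠ i → l ≠ j → f l = 0) →
            ∑ l, f l = f i + f j := by
          intro f hf
          rw [← Finset.sum_pair hij]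
          refine (Finset.sum_subset (Finset.subset_univ _) fun x _ hx => ?_).symm
          have hxi : x ≠ i := fun h => hx (by simp [h])
          have hxj : x ≠ j := fun h => hx (by simp [h])
          exact hf x hxi hxj
        have hαβ : (w i)^2 + (w j)^2 = 1 := by
          have h1 := norm_sq_euc w
          rw [hw1] at h1
          norm_num at h1
          rw [hpairs (fun l => (w l)^2) (fun l hli hlj => by simp [hothers l hli hlj])] at h1
          linarith
        have hρw : ρ w = lam i * (w i)^2 + lam j * (w j)^2 := by
          rw [hρsum w, hpairs (fun l => lam l * (w l)^2)
            (fun l hli hlj => by simp [hothers l hli hlj])]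
        have hτsq : τ^2 = (lam i - lam j)^2 * ((w i)^2 * (w j)^2) := by
          have h1 : ‖r w‖^2 = ∑ l, ((lam l - ρ w) * w l)^2 := by
            rw [norm_sq_euc]
            exact Finset.sum_congr rfl fun l _ => by rw [hrapp]
          rw [hrw] at h1
          rw [hpairs (fun l => ((lam l - ρ w) * w l)^2)
            (fun l hli hlj => by simp [hothers l hli hlj])] at h1
          have hli : lam i - ρ w = (lam i - lam j) * (w j)^2 := by
            rw [hρw]; linear_combination (-lam i) * hαβ
          have hlj : lam j - ρ w = (lam j - lam i) * (w i)^2 := by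
            rw [hρw]; linear_combination (-lam j) * hαβ
          rw [hli, hlj] at h1
          linear_combination h1 + (lam i - lam j)^2 * (w i)^2 * (w j)^2 * hαβ
        refine Set.mem_biUnion (show ((i, j) : Fin n × Fin n) ∈ {p : Fin n × Fin n | p.1 ≠ p.2}
          from hij) ?_
        refine ⟨(w i, w j), ⟨?_, ?_⟩, ?_⟩
        · show (Q i j).IsRoot (w i)
          simp only [hQ, Polynomial.IsRoot, Polynomial.eval_sub, Polynomial.eval_mul,
            Polynomial.eval_C, Polynomial.eval_pow, Polynomial.eval_X]
          linear_combination -hτsq - (lam i - lam j)^2 * (w i)^2 * hαβ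
        · show (Q i j).IsRoot (w j)
          simp only [hQ, Polynomial.IsRoot, Polynomial.eval_sub, Polynomial.eval_mul,
            Polynomial.eval_C, Polynomial.eval_pow, Polynomial.eval_X]
          linear_combination -hτsq - (lam i - lam j)^2 * (w j)^2 * hαβ
        · show EuclideanSpace.single i (w i) + EuclideanSpace.single j (w j) = w
          ext l
          simp only [PiLp.add_apply, EuclideanSpace.single_apply]
          by_cases hli : l = i
          · subst hli
            rw [if_pos rfl, if_neg hij, add_zero]
          · by_cases hlj : l = j
            · subst hlj
              rw [if_pos rfl, if_neg hli, zero_add]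
            · rw [if_neg hli, if_neg hlj, add_zero, (hothers l hli hlj)]
    have hCfin : C.Finite := hKfin.subset hCsub
    have husph : ∀ m, u m ∈ Metric.sphere (0 : EuclideanSpace ℝ (Fin n)) 1 :=
      fun m => mem_sphere_zero_iff_norm.mpr (hunit _)
    obtain ⟨w, hw⟩ := aux_converge (isCompact_sphere (0 : EuclideanSpace ℝ (Fin n)) 1)
      husph hCfin (by
        refine hdiff.congr fun m => ?_
        rfl)
    exact ⟨w, hw⟩

theorem steepest_descent_even_converges {n : ℕ} (lam : Fin n → ℝ) (hlam : StrictMono lam)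
    (v vt : ℕ → EuclideanSpace ℝ (Fin n)) (hv0 : ‖v 0‖ = 1)
    (hg : 2 ≤ vgrade (Matrix.diagonal lam) (v 0))
    (hstep : ∀ k, vt (k + 1) = mulv (Matrix.diagonal lam) (v k) -
      (inner ℝ (v k) (mulv (Matrix.diagonal lam) (v k)) : ℝ) • v k)
    (hnorm : ∀ k, v (k + 1) = ‖vt (k + 1)‖⁻¹ • vt (k + 1)) :
    ∃ vstar : EuclideanSpace ℝ (Fin n), Tendsto (fun k => v (2 * k)) atTop (𝓝 vstar) :=
  steepest_descent_even_converges' lam hlam v vt hv0 hstep hnorm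
end
end
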